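/- If Σ : (0,∞) → (0,2) satisfies Σ(y)·log y → -∞ as y → 0⁺ (equivalently y^{Σ(y)} → 0), then the family of Cauchy–Poisson kernels {P^{Σ(y)}_y : y > 0} concentrates at the origin: for every λ > 0, ∫_{|x| ≥ λ} P^{Σ(y)}_y(x) dx → 0 as y → 0⁺. -/

import Mathlib

open MeasureTheory Real Filter Set

open Module

variable {n : ℕ}

lemma aux_meas_set (n : ℕ) (lam : ℝ) :
    MeasurableSet {x : EuclideanSpace ℝ (Fin n) | lam ≤ ‖x‖} :=
  (isClosed_le continuous_const continuous_norm).measurableSet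

lemma tail_integrable (n : ℕ) (σ lam : ℝ) (hσ : 0 < σ) (hlam : 0 < lam) :
    IntegrableOn (fun x : EuclideanSpace ℝ (Fin n) => ‖x‖ ^ (-((n:ℝ) + σ)))
      {x : EuclideanSpace ℝ (Fin n) | lam ≤ ‖x‖} := by
  set r : ℝ := (n:ℝ) + σ with hr
  have hr0 : 0 < r := by positivity
  have hfin : (finrank ℝ (EuclideanSpace ℝ (Fin n)) : ℝ) < r := by
    rw [finrank_euclideanSpace_fin]; linarith
  set C : ℝ := (1 + lam⁻¹) ^ r with hC
  have hC0 : 0 < C := rpow_pos_of_pos (by positivity) _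
  refine Integrable.mono' (((integrable_one_add_norm hfin).const_mul C).restrict)
    ?_ ?_
  · refine ContinuousOn.aestronglyMeasurable (fun x hx => ?_) (aux_meas_set n lam)
    have hx0 : ‖x‖ ≠ 0 := by
      have : lam ≤ ‖x‖ := hx
      exact (lt_of_lt_of_le hlam this).ne'
    exact ((Real.continuousAt_rpow_const _ _ (Or.inl hx0)).comp
      continuous_norm.continuousAt).continuousWithinAt
  filter_upwards [ae_restrict_mem (aux_meas_set n lam)] with x hx
  have hx' : lam ≤ ‖x‖ := hx
  have hx0 : 0 < ‖x‖ := lt_of_lt_of_le hlam hx'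
  have h1 : (1 + lam⁻¹)⁻¹ * (1 + ‖x‖) ≤ ‖x‖ := by
    rw [inv_mul_le_iff₀ (by positivity)]
    have : 1 ≤ lam⁻¹ * ‖x‖ := by
      rw [← inv_mul_cancel₀ hlam.ne']
      exact mul_le_mul_of_nonneg_left hx' (by positivity)
    nlinarith [hx0]
  have h2 : ‖x‖ ^ (-r) ≤ ((1 + lam⁻¹)⁻¹ * (1 + ‖x‖)) ^ (-r) :=
    rpow_le_rpow_of_nonpos (by positivity) h1 (by linarith)
  have h3 : ((1 + lam⁻¹)⁻¹ * (1 + ‖x‖)) ^ (-r) = C * (1 + ‖x‖) ^ (-r) := by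
    rw [mul_rpow (by positivity) (by positivity), inv_rpow (by positivity : (0:ℝ) ≤ 1 + lam⁻¹),
      Real.rpow_neg (by positivity : (0:ℝ) ≤ 1 + lam⁻¹), inv_inv]
  rw [Real.norm_eq_abs, abs_of_nonneg (rpow_nonneg (norm_nonneg x) _)]
  calc ‖x‖ ^ (-r) ≤ C * (1 + ‖x‖) ^ (-r) := h3 ▸ h2

lemma tail_val (n : ℕ) (hn : 1 ≤ n) (σ lam : ℝ) (hσ : 0 < σ) (hlam : 0 < lam) :
    ∫ x in {x : EuclideanSpace ℝ (Fin n) | lam ≤ ‖x‖}, ‖x‖ ^ (-((n:ℝ) + σ)) =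
      ((n : ℝ) * (volume (Metric.ball (0 : EuclideanSpace ℝ (Fin n)) 1)).toReal) *
        (lam ^ (-σ) / σ) := by
  haveI : Nonempty (Fin n) := ⟨⟨0, hn⟩⟩
  set E := EuclideanSpace ℝ (Fin n) with hE
  set g : ℝ → ℝ := fun r => r ^ (-((n:ℝ) + σ)) with hg
  have h1 : ∫ x in {x : E | lam ≤ ‖x‖}, ‖x‖ ^ (-((n:ℝ) + σ)) =
      ∫ x : E, (Ici lam).indicator g ‖x‖ := by
    rw [← integral_indicator (aux_meas_set n lam)]
    refine integral_congr_ae (Eventually.of_forall fun x => ?_)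
    by_cases hx : lam ≤ ‖x‖ <;> simp [indicator, hx, hg]
  rw [h1, integral_fun_norm_addHaar volume ((Ici lam).indicator g)]
  have hdim : finrank ℝ E = n := finrank_euclideanSpace_fin
  rw [hdim]
  have h2 : (∫ r in Ioi (0:ℝ), r ^ (n - 1) • (Ici lam).indicator g r) = lam ^ (-σ) / σ := by
    calc ∫ r in Ioi (0:ℝ), r ^ (n - 1) • (Ici lam).indicator g r
        = ∫ r in Ioi (0:ℝ), (Ici lam).indicator (fun r => r ^ (n - 1) * g r) r := by
          refine setIntegral_congr_fun measurableSet_Ioi fun r _ => ?_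
          by_cases h : lam ≤ r <;> simp [indicator, h, smul_eq_mul]
      _ = ∫ r in Ioi (0:ℝ) ∩ Ici lam, r ^ (n - 1) * g r :=
          setIntegral_indicator measurableSet_Ici
      _ = ∫ r in Ici lam, r ^ (n - 1) * g r := by
          have hss : Ioi (0:ℝ) ∩ Ici lam = Ici lam :=
            inter_eq_self_of_subset_right (fun r hr => lt_of_lt_of_le hlam hr)
          rw [hss]
      _ = ∫ r in Ici lam, r ^ (-(1:ℝ) - σ) := by
          refine setIntegral_congr_fun measurableSet_Ici fun r hr => ?_
          have hr0 : 0 < r := lt_of_lt_of_le hlam hr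
          rw [hg, ← Real.rpow_natCast r (n - 1), Nat.cast_sub hn, Nat.cast_one,
            ← Real.rpow_add hr0]
          congr 1; ring
      _ = ∫ r in Ioi lam, r ^ (-(1:ℝ) - σ) := integral_Ici_eq_integral_Ioi
      _ = lam ^ (-σ) / σ := by
          rw [integral_Ioi_rpow_of_lt (by linarith) hlam]
          have h3 : (-(1:ℝ) - σ + 1) = -σ := by ring
          rw [h3, div_neg, neg_div, neg_neg]
  rw [h2, nsmul_eq_mul, smul_eq_mul, mul_assoc]
  rfl

lemma J_integrable (n : ℕ) (hn : 1 ≤ n) (σ : ℝ) (hσ : 0 < σ) :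
    IntegrableOn (fun ρ : ℝ => (1 + ρ^2) ^ (-((n:ℝ) + σ)/2) * ρ^(n-1)) (Ioi 0) := by
  have hc : Continuous fun ρ : ℝ => (1 + ρ^2) ^ (-((n:ℝ) + σ)/2) * ρ^(n-1) := by
    have h1 : Continuous fun ρ : ℝ => 1 + ρ^2 := by continuity
    exact (h1.rpow_const fun x => Or.inl (by positivity : (0:ℝ) < 1 + x^2).ne').mul
      (continuous_pow _)
  rw [← Ioc_union_Ioi_eq_Ioi (zero_le_one (α := ℝ))]
  refine IntegrableOn.union ((hc.integrableOn_Icc).mono_set Ioc_subset_Icc_self) ?_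
  refine Integrable.mono' ((integrableOn_Ioi_rpow_of_lt (by linarith : -1 - σ < -1)
    one_pos)) hc.aestronglyMeasurable.restrict ?_
  filter_upwards [ae_restrict_mem measurableSet_Ioi] with ρ hρ
  have hρ1 : (1:ℝ) < ρ := hρ
  have hρ0 : (0:ℝ) < ρ := lt_trans one_pos hρ1
  have hexp : -((n:ℝ) + σ)/2 ≤ 0 := by
    have : (0:ℝ) ≤ (n:ℝ) + σ := by positivity
    linarith
  have hpow : (ρ^2 : ℝ) ^ (-((n:ℝ) + σ)/2) = ρ ^ (-((n:ℝ) + σ)) := by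
    rw [← Real.rpow_natCast ρ 2, ← Real.rpow_mul hρ0.le]
    congr 1; push_cast; ring
  have e1 : (1 + ρ^2) ^ (-((n:ℝ) + σ)/2) ≤ ρ ^ (-((n:ℝ) + σ)) := by
    rw [← hpow]
    exact rpow_le_rpow_of_nonpos (by positivity : (0:ℝ) < ρ^2)
      (by linarith : ρ^2 ≤ 1 + ρ^2) hexp
  have e2 : (ρ:ℝ)^(n-1) = ρ ^ ((n:ℝ) - 1) := by
    rw [← Real.rpow_natCast ρ (n-1), Nat.cast_sub hn, Nat.cast_one]
  calc ‖(1 + ρ^2) ^ (-((n:ℝ) + σ)/2) * ρ^(n-1)‖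
      = (1 + ρ^2) ^ (-((n:ℝ) + σ)/2) * ρ^(n-1) := by
        rw [Real.norm_eq_abs, abs_of_nonneg (by positivity)]
    _ ≤ ρ ^ (-((n:ℝ) + σ)) * ρ ^ ((n:ℝ) - 1) := by
        rw [← e2]
        exact mul_le_mul_of_nonneg_right e1 (by positivity)
    _ = ρ ^ (-1 - σ) := by rw [← Real.rpow_add hρ0]; congr 1; ring

lemma J_lower (n : ℕ) (hn : 1 ≤ n) (σ : ℝ) (hσ : 0 < σ) :
    (2:ℝ) ^ (-((n:ℝ) + σ)/2) / σ ≤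
      ∫ ρ in Ioi (0:ℝ), (1 + ρ^2) ^ (-((n:ℝ) + σ)/2) * ρ^(n-1) := by
  set e : ℝ := -((n:ℝ) + σ)/2 with he
  have he0 : e ≤ 0 := by
    rw [he]
    have : (0:ℝ) ≤ (n:ℝ) + σ := by positivity
    linarith
  have step1 : (2:ℝ) ^ e / σ = ∫ ρ in Ioi (1:ℝ), (2:ℝ) ^ e * ρ ^ (-1 - σ) := by
    rw [MeasureTheory.integral_const_mul, integral_Ioi_rpow_of_lt (by linarith : -1 - σ < -1) one_pos]
    rw [(by ring : -1 - σ + 1 = -σ), Real.one_rpow, div_neg, neg_div, neg_neg, mul_one_div]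
  rw [step1]
  have step2 : (∫ ρ in Ioi (1:ℝ), (2:ℝ) ^ e * ρ ^ (-1 - σ)) ≤
      ∫ ρ in Ioi (1:ℝ), (1 + ρ^2) ^ e * ρ^(n-1) := by
    refine setIntegral_mono_on
      ((integrableOn_Ioi_rpow_of_lt (by linarith : -1 - σ < -1) one_pos).const_mul _)
      ((J_integrable n hn σ hσ).mono_set (Ioi_subset_Ioi zero_le_one))
      measurableSet_Ioi fun ρ hρ => ?_
    have hρ1 : (1:ℝ) < ρ := hρ
    have hρ0 : (0:ℝ) < ρ := lt_trans one_pos hρ1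
    have hpow : (ρ^2 : ℝ) ^ e = ρ ^ (-((n:ℝ) + σ)) := by
      rw [← Real.rpow_natCast ρ 2, ← Real.rpow_mul hρ0.le]
      congr 1; rw [he]; push_cast; ring
    have e1 : (2:ℝ) ^ e * ρ ^ (-((n:ℝ) + σ)) ≤ (1 + ρ^2) ^ e := by
      have h2 : (2 * ρ^2 : ℝ) ^ e ≤ (1 + ρ^2) ^ e :=
        rpow_le_rpow_of_nonpos (by positivity) (by nlinarith) he0
      rwa [mul_rpow (by norm_num) (by positivity), hpow] at h2
    have e2 : ρ ^ (-1 - σ) ≤ ρ ^ (-((n:ℝ) + σ)) * ρ^(n-1) := by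
      have e3 : (1:ℝ) ≤ ρ^(n-1) * ρ ^ (1 - (n:ℝ)) := by
        rw [← Real.rpow_natCast ρ (n-1), Nat.cast_sub hn, Nat.cast_one,
          ← Real.rpow_add hρ0, (by ring : (n:ℝ) - 1 + (1 - (n:ℝ)) = 0), Real.rpow_zero]
      calc ρ ^ (-1 - σ) = ρ ^ (-((n:ℝ) + σ)) * ρ ^ ((n:ℝ) - 1) := by
            rw [← Real.rpow_add hρ0]; congr 1; ring
        _ ≤ ρ ^ (-((n:ℝ) + σ)) * (ρ^(n-1) * ρ ^ (1 - (n:ℝ)) * ρ ^ ((n:ℝ) - 1)) := by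
            have := mul_le_mul_of_nonneg_right e3 (le_of_lt (rpow_pos_of_pos hρ0 ((n:ℝ) - 1)))
            rw [one_mul] at this
            exact mul_le_mul_of_nonneg_left this (rpow_nonneg hρ0.le _)
        _ = ρ ^ (-((n:ℝ) + σ)) * ρ^(n-1) := by
            rw [mul_assoc, ← Real.rpow_add hρ0, (by ring : 1 - (n:ℝ) + ((n:ℝ) - 1) = 0),
              Real.rpow_zero, mul_one]
    calc (2:ℝ) ^ e * ρ ^ (-1 - σ) ≤ (2:ℝ) ^ e * (ρ ^ (-((n:ℝ) + σ)) * ρ^(n-1)) :=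
          mul_le_mul_of_nonneg_left e2 (rpow_nonneg (by norm_num) _)
      _ = ((2:ℝ) ^ e * ρ ^ (-((n:ℝ) + σ))) * ρ^(n-1) := by ring
      _ ≤ (1 + ρ^2) ^ e * ρ^(n-1) := mul_le_mul_of_nonneg_right e1 (by positivity)
  refine step2.trans (setIntegral_mono_set (J_integrable n hn σ hσ) ?_
    (HasSubset.Subset.eventuallyLE (Ioi_subset_Ioi zero_le_one)))
  filter_upwards [ae_restrict_mem measurableSet_Ioi] with ρ hρ
  have : (0:ℝ) < ρ := hρ
  positivity


/-- if `Σ : (0,∞) → (0,2)` satisfies `Σ(y)·log y → -∞` as `y → 0⁺`, then the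
Cauchy–Poisson family `{P^{Σ(y)}_y}` concentrates at the origin: for every `λ > 0`,
`∫_{|x| ≥ λ} P^{Σ(y)}_y(x) dx → 0` as `y → 0⁺`. -/
theorem stmt5 (n : ℕ) (hn : 1 ≤ n)
    (ω : ℝ)
    (hω : ω = (n : ℝ) * (volume (Metric.ball (0 : EuclideanSpace ℝ (Fin n)) 1)).toReal)
    (I : ℝ → ℝ)
    (hI : ∀ σ, I σ = ω * ∫ ρ in Ioi (0:ℝ), (1 + ρ^2) ^ (-((n:ℝ) + σ)/2) * ρ^(n-1))
    (P : ℝ → ℝ → EuclideanSpace ℝ (Fin n) → ℝ)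
    (hP : ∀ σ y x, P σ y x = (I σ)⁻¹ * y ^ σ * (y^2 + ‖x‖^2) ^ (-((n:ℝ) + σ)/2))
    (S : ℝ → ℝ) (hS : ∀ y, 0 < y → S y ∈ Ioo (0:ℝ) 2)
    (hlim : Tendsto (fun y => S y * Real.log y) (nhdsWithin 0 (Ioi 0)) atBot) :
    ∀ lam : ℝ, 0 < lam →
      Tendsto (fun y => ∫ x in {x : EuclideanSpace ℝ (Fin n) | lam ≤ ‖x‖}, P (S y) y x)
        (nhdsWithin 0 (Ioi 0)) (nhds 0) := by
  intro lam hlam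
  haveI : Nonempty (Fin n) := ⟨⟨0, hn⟩⟩
  have hn0 : (0:ℝ) < n := by exact_mod_cast hn
  have hvol : 0 < (volume (Metric.ball (0 : EuclideanSpace ℝ (Fin n)) 1)).toReal :=
    ENNReal.toReal_pos (Metric.measure_ball_pos volume 0 one_pos).ne' measure_ball_lt_top.ne
  have hω0 : 0 < ω := by rw [hω]; positivity
  set M : ℝ := max 1 (lam ^ (-(2:ℝ))) with hM
  have hM0 : 0 < M := lt_of_lt_of_le one_pos (le_max_left _ _)
  set C : ℝ := 2 ^ (((n:ℝ) + 2)/2) * M with hC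
  have hC0 : 0 < C := by positivity
  have key : ∀ y : ℝ, 0 < y →
      (0 ≤ ∫ x in {x : EuclideanSpace ℝ (Fin n) | lam ≤ ‖x‖}, P (S y) y x) ∧
      (∫ x in {x : EuclideanSpace ℝ (Fin n) | lam ≤ ‖x‖}, P (S y) y x) ≤
        C * Real.exp (S y * Real.log y) := by
    intro y hy
    set σ := S y with hσdef
    obtain ⟨hσ0, hσ2⟩ := hS y hy
    set e : ℝ := -((n:ℝ) + σ)/2 with he
    have he0 : e ≤ 0 := by
      rw [he]
      have : (0:ℝ) ≤ (n:ℝ) + σ := by positivity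
      linarith
    -- lower bound for I σ
    have hb : ω * ((2:ℝ) ^ e / σ) ≤ I σ := by
      rw [hI σ]
      exact mul_le_mul_of_nonneg_left (J_lower n hn σ hσ0) hω0.le
    have hb0 : 0 < ω * ((2:ℝ) ^ e / σ) := by positivity
    have hIσ : 0 < I σ := lt_of_lt_of_le hb0 hb
    -- rewrite the integral
    have hsplit : (∫ x in {x : EuclideanSpace ℝ (Fin n) | lam ≤ ‖x‖}, P σ y x) =
        (I σ)⁻¹ * y ^ σ * ∫ x in {x : EuclideanSpace ℝ (Fin n) | lam ≤ ‖x‖},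
          (y^2 + ‖x‖^2) ^ e := by
      simp_rw [hP σ y, mul_assoc, ← he]
      rw [MeasureTheory.integral_const_mul, MeasureTheory.integral_const_mul]
    have hT0 : 0 ≤ ∫ x in {x : EuclideanSpace ℝ (Fin n) | lam ≤ ‖x‖},
        (y^2 + ‖x‖^2) ^ e :=
      setIntegral_nonneg (aux_meas_set n lam) fun x _ => rpow_nonneg (by positivity) _
    constructor
    · rw [hsplit]
      have := rpow_nonneg hy.le σ
      positivity
    -- upper bound for the inner integral
    have hTle : (∫ x in {x : EuclideanSpace ℝ (Fin n) | lam ≤ ‖x‖}, (y^2 + ‖x‖^2) ^ e) ≤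
        ω * (lam ^ (-σ) / σ) := by
      have hmono : (∫ x in {x : EuclideanSpace ℝ (Fin n) | lam ≤ ‖x‖}, (y^2 + ‖x‖^2) ^ e) ≤
          ∫ x in {x : EuclideanSpace ℝ (Fin n) | lam ≤ ‖x‖}, ‖x‖ ^ (-((n:ℝ) + σ)) := by
        refine integral_mono_of_nonneg (Eventually.of_forall fun x => rpow_nonneg (by positivity) _)
          (tail_integrable n σ lam hσ0 hlam) ?_
        filter_upwards [ae_restrict_mem (aux_meas_set n lam)] with x hx
        have hx' : lam ≤ ‖x‖ := hx
        have hx0 : 0 < ‖x‖ := lt_of_lt_of_le hlam hx'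
        have hpow : (‖x‖^2 : ℝ) ^ e = ‖x‖ ^ (-((n:ℝ) + σ)) := by
          rw [← Real.rpow_natCast ‖x‖ 2, ← Real.rpow_mul hx0.le]
          congr 1; rw [he]; push_cast; ring
        rw [← hpow]
        exact rpow_le_rpow_of_nonpos (by positivity) (by nlinarith) he0
      rw [tail_val n hn σ lam hσ0 hlam, ← hω] at hmono
      exact hmono
    rw [hsplit]
    -- combine
    have hinv : (I σ)⁻¹ ≤ (ω * ((2:ℝ) ^ e / σ))⁻¹ := inv_anti₀ hb0 hb
    have hyσ : (0:ℝ) ≤ y ^ σ := rpow_nonneg hy.le σ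
    have step : (I σ)⁻¹ * y ^ σ * (∫ x in {x : EuclideanSpace ℝ (Fin n) | lam ≤ ‖x‖},
        (y^2 + ‖x‖^2) ^ e) ≤ (ω * ((2:ℝ) ^ e / σ))⁻¹ * y ^ σ * (ω * (lam ^ (-σ) / σ)) := by
      refine mul_le_mul ?_ hTle hT0 (by positivity)
      exact mul_le_mul_of_nonneg_right hinv hyσ
    refine step.trans ?_
    have hid : (ω * ((2:ℝ) ^ e / σ))⁻¹ * y ^ σ * (ω * (lam ^ (-σ) / σ)) =
        ((2:ℝ) ^ e)⁻¹ * (y ^ σ * lam ^ (-σ)) := by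
      field_simp
      ring_nf
      exact mul_inv_cancel₀ hσ0.ne'
    rw [hid]
    have h2e : ((2:ℝ) ^ e)⁻¹ = 2 ^ (((n:ℝ) + σ)/2) := by
      rw [← Real.rpow_neg (by norm_num : (0:ℝ) ≤ 2)]
      congr 1
      rw [he]; ring
    rw [h2e]
    have hstep2 : (2:ℝ) ^ (((n:ℝ) + σ)/2) ≤ 2 ^ (((n:ℝ) + 2)/2) :=
      rpow_le_rpow_of_exponent_le one_le_two (by linarith)
    have hlamM : lam ^ (-σ) ≤ M := by
      rcases le_or_gt 1 lam with h1 | h1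
      · refine le_trans ?_ (le_max_left _ _)
        calc lam ^ (-σ) ≤ lam ^ (0:ℝ) :=
              rpow_le_rpow_of_exponent_le h1 (by linarith)
          _ = 1 := Real.rpow_zero lam
      · exact le_trans (rpow_le_rpow_of_exponent_ge hlam h1.le (by linarith)) (le_max_right _ _)
    have hylog : y ^ σ = Real.exp (σ * Real.log y) := by
      rw [rpow_def_of_pos hy, mul_comm]
    calc (2:ℝ) ^ (((n:ℝ) + σ)/2) * (y ^ σ * lam ^ (-σ))
        ≤ 2 ^ (((n:ℝ) + 2)/2) * (y ^ σ * M) := by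
          refine mul_le_mul hstep2 ?_ (by positivity) (by positivity)
          exact mul_le_mul_of_nonneg_left hlamM hyσ
      _ = C * Real.exp (σ * Real.log y) := by rw [hylog, hC]; ring
  -- squeeze
  have hExp : Tendsto (fun y => C * Real.exp (S y * Real.log y))
      (nhdsWithin 0 (Ioi 0)) (nhds 0) := by
    have := (Real.tendsto_exp_atBot.comp hlim).const_mul C
    simpa using this
  refine squeeze_zero' ?_ ?_ hExp
  · filter_upwards [self_mem_nhdsWithin] with y hy
    exact (key y hy).1
  · filter_upwards [self_mem_nhdsWithin] with y hy
    exact (key y hy).2
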